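/- On Ω = (−1,1)², let v₁(x,y) = cos(πx/2)·sin(πy) and v₂(x,y) = cos(πy/2)·sin(πx). Then P(α) := ∫_Ω |v₁ + α v₂|²·(v₁ + α v₂)·(α v₁ − v₂) dx dy = (3/16)·(α³ − α) for all real α, whose simple roots are α = 0, 1, −1. -/

import Mathlib

open Real Set MeasureTheory intervalIntegral

private lemma hd_lin (k t : ℝ) : HasDerivAt (fun s : ℝ => k * s) k t := by
  simpa using (hasDerivAt_id t).const_mul k

private lemma hd_sinm (k t : ℝ) :
    HasDerivAt (fun s : ℝ => Real.sin (k * s)) (Real.cos (k * t) * k) t := by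
  simpa using (hd_lin k t).sin

private lemma hd_half (t : ℝ) : HasDerivAt (fun s : ℝ => π * s / 2) (π / 2) t := by
  simpa using (hd_lin π t).div_const 2

private lemma hd_cos_half (t : ℝ) :
    HasDerivAt (fun s : ℝ => Real.cos (π * s / 2)) (-Real.sin (π * t / 2) * (π / 2)) t :=
  (hd_half t).cos

private lemma ioo_to_interval (f : ℝ → ℝ) :
    (∫ t in Set.Ioo (-1 : ℝ) 1, f t) = ∫ t in (-1 : ℝ)..1, f t := by
  rw [intervalIntegral.integral_of_le (by norm_num : (-1:ℝ) ≤ 1),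
    MeasureTheory.integral_Ioc_eq_integral_Ioo]

private lemma J1 : (∫ t in Set.Ioo (-1 : ℝ) 1, Real.cos (π * t / 2) ^ 4) = 3 / 4 := by
  rw [ioo_to_interval]
  have key : ∀ t ∈ Set.uIcc (-1:ℝ) 1,
      HasDerivAt (fun s => 3*s/8 + Real.sin (π*s)/(2*π) + Real.sin (2*π*s)/(16*π))
        (Real.cos (π * t / 2) ^ 4) t := by
    intro t _
    have a1 : HasDerivAt (fun s : ℝ => 3*s/8) (3/8 : ℝ) t := by
      simpa using (hd_lin 3 t).div_const 8
    have h1 := (a1.add ((hd_sinm π t).div_const (2*π))).add ((hd_sinm (2*π) t).div_const (16*π))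
    convert h1 using 1
    · rfl
    · rfl
    · rfl
    have c1 : Real.cos (π*t) = 2 * Real.cos (π*t/2)^2 - 1 := by
      have h := Real.cos_two_mul (π*t/2)
      rw [show 2*(π*t/2) = π*t by ring] at h
      exact h
    have c2 : Real.cos (2*π*t) = 2 * Real.cos (π*t)^2 - 1 := by
      rw [show 2*π*t = 2*(π*t) by ring, Real.cos_two_mul]
    rw [c2, c1]
    have hπ := Real.pi_ne_zero
    field_simp
    ring
  rw [intervalIntegral.integral_eq_sub_of_hasDerivAt key
    (Continuous.intervalIntegrable (by continuity) _ _)]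
  have s2 : Real.sin (2*π) = 0 := Real.sin_two_pi
  norm_num [mul_neg, mul_one, Real.sin_neg, Real.sin_pi, s2,
    show (2:ℝ)*π*1 = 2*π by ring, show (2:ℝ)*π*(-1) = -(2*π) by ring]

private lemma J2 : (∫ t in Set.Ioo (-1 : ℝ) 1, Real.sin (π * t) ^ 4) = 3 / 4 := by
  rw [ioo_to_interval]
  have key : ∀ t ∈ Set.uIcc (-1:ℝ) 1,
      HasDerivAt (fun s => 3*s/8 - Real.sin (2*π*s)/(4*π) + Real.sin (4*π*s)/(32*π))
        (Real.sin (π * t) ^ 4) t := by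
    intro t _
    have a1 : HasDerivAt (fun s : ℝ => 3*s/8) (3/8 : ℝ) t := by
      simpa using (hd_lin 3 t).div_const 8
    have h1 := (a1.sub ((hd_sinm (2*π) t).div_const (4*π))).add ((hd_sinm (4*π) t).div_const (32*π))
    convert h1 using 1
    · rfl
    · rfl
    · rfl
    have c2 : Real.cos (2*π*t) = 2 * Real.cos (π*t)^2 - 1 := by
      rw [show 2*π*t = 2*(π*t) by ring, Real.cos_two_mul]
    have c4 : Real.cos (4*π*t) = 2 * Real.cos (2*π*t)^2 - 1 := by
      rw [show 4*π*t = 2*(2*π*t) by ring, Real.cos_two_mul]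
    have hs : Real.sin (π*t) ^ 2 = 1 - Real.cos (π*t)^2 := Real.sin_sq _
    rw [show Real.sin (π*t)^4 = (Real.sin (π*t)^2)^2 by ring, hs, c4, c2]
    have hπ := Real.pi_ne_zero
    field_simp
    ring
  rw [intervalIntegral.integral_eq_sub_of_hasDerivAt key
    (Continuous.intervalIntegrable (by continuity) _ _)]
  have s2 : Real.sin (2*π) = 0 := Real.sin_two_pi
  have s4 : Real.sin (4*π) = 0 := by
    rw [show (4:ℝ)*π = 2*(2*π) by ring, Real.sin_two_mul, s2]; ring
  norm_num [mul_neg, mul_one, Real.sin_neg, s2, s4,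
    show (2:ℝ)*π*1 = 2*π by ring, show (2:ℝ)*π*(-1) = -(2*π) by ring,
    show (4:ℝ)*π*1 = 4*π by ring, show (4:ℝ)*π*(-1) = -(4*π) by ring]

private lemma J3 : (∫ t in Set.Ioo (-1 : ℝ) 1, Real.cos (π * t / 2) ^ 3 * Real.sin (π * t)) = 0 := by
  rw [ioo_to_interval]
  have key : ∀ t ∈ Set.uIcc (-1:ℝ) 1,
      HasDerivAt (fun s => -(4/(5*π)) * Real.cos (π*s/2)^5)
        (Real.cos (π * t / 2) ^ 3 * Real.sin (π * t)) t := by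
    intro t _
    have h1 := ((hd_cos_half t).pow 5).const_mul (-(4/(5*π)))
    convert h1 using 1
    · rfl
    · rfl
    · rfl
    have h2s : Real.sin (π*t) = 2 * Real.sin (π*t/2) * Real.cos (π*t/2) := by
      have h := Real.sin_two_mul (π*t/2)
      rw [show 2*(π*t/2) = π*t by ring] at h
      exact h
    rw [h2s]
    have hπ := Real.pi_ne_zero
    field_simp
    ring
  rw [intervalIntegral.integral_eq_sub_of_hasDerivAt key
    (Continuous.intervalIntegrable (by continuity) _ _)]
  have e1 : Real.cos (π*(1:ℝ)/2) = 0 := by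
    rw [show π*(1:ℝ)/2 = π/2 by ring]; exact Real.cos_pi_div_two
  have e2 : Real.cos (π*(-1:ℝ)/2) = 0 := by
    rw [show π*(-1:ℝ)/2 = -(π/2) by ring, Real.cos_neg]; exact Real.cos_pi_div_two
  have e3 : Real.cos (-π/2) = 0 := by
    rw [show -π/2 = -(π/2) by ring, Real.cos_neg]; exact Real.cos_pi_div_two
  simp [e1, e2, e3]

private lemma J4 : (∫ t in Set.Ioo (-1 : ℝ) 1, Real.cos (π * t / 2) * Real.sin (π * t) ^ 3) = 0 := by
  rw [ioo_to_interval]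
  have key : ∀ t ∈ Set.uIcc (-1:ℝ) 1,
      HasDerivAt (fun s => (16/π) * (Real.cos (π*s/2)^7/7 - Real.cos (π*s/2)^5/5))
        (Real.cos (π * t / 2) * Real.sin (π * t) ^ 3) t := by
    intro t _
    have h1 := ((((hd_cos_half t).pow 7).div_const 7).sub
      (((hd_cos_half t).pow 5).div_const 5)).const_mul (16/π)
    convert h1 using 1
    · rfl
    · rfl
    · rfl
    have h2s : Real.sin (π*t) = 2 * Real.sin (π*t/2) * Real.cos (π*t/2) := by
      have h := Real.sin_two_mul (π*t/2)
      rw [show 2*(π*t/2) = π*t by ring] at h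
      exact h
    have hs : Real.sin (π*t/2) ^ 2 = 1 - Real.cos (π*t/2)^2 := Real.sin_sq _
    rw [h2s]
    have key2 : Real.cos (π*t/2) * (2 * Real.sin (π*t/2) * Real.cos (π*t/2))^3
        = 8*Real.cos (π*t/2)^4*Real.sin (π*t/2) - 8*Real.cos (π*t/2)^6*Real.sin (π*t/2) := by
      linear_combination (8*Real.cos (π*t/2)^4*Real.sin (π*t/2)) * hs
    rw [key2]
    have hπ := Real.pi_ne_zero
    field_simp
    ring
  rw [intervalIntegral.integral_eq_sub_of_hasDerivAt key
    (Continuous.intervalIntegrable (by continuity) _ _)]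
  have e1 : Real.cos (π*(1:ℝ)/2) = 0 := by
    rw [show π*(1:ℝ)/2 = π/2 by ring]; exact Real.cos_pi_div_two
  have e2 : Real.cos (π*(-1:ℝ)/2) = 0 := by
    rw [show π*(-1:ℝ)/2 = -(π/2) by ring, Real.cos_neg]; exact Real.cos_pi_div_two
  have e3 : Real.cos (-π/2) = 0 := by
    rw [show -π/2 = -(π/2) by ring, Real.cos_neg]; exact Real.cos_pi_div_two
  simp [e1, e2, e3]

private lemma J5 : (∫ t in Set.Ioo (-1 : ℝ) 1, Real.cos (π * t / 2) ^ 2 * Real.sin (π * t) ^ 2) = 1 / 2 := by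
  rw [ioo_to_interval]
  have key : ∀ t ∈ Set.uIcc (-1:ℝ) 1,
      HasDerivAt (fun s => s/4 + Real.sin (π*s)/(8*π) - Real.sin (2*π*s)/(8*π)
          - Real.sin (3*π*s)/(24*π))
        (Real.cos (π * t / 2) ^ 2 * Real.sin (π * t) ^ 2) t := by
    intro t _
    have a1 : HasDerivAt (fun s : ℝ => s/4) (1/4 : ℝ) t := by
      simpa using (hasDerivAt_id t).div_const 4
    have h1 := ((a1.add ((hd_sinm π t).div_const (8*π))).sub
      ((hd_sinm (2*π) t).div_const (8*π))).sub ((hd_sinm (3*π) t).div_const (24*π))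
    convert h1 using 1
    · rfl
    · rfl
    · rfl
    have c2 : Real.cos (2*π*t) = 2 * Real.cos (π*t)^2 - 1 := by
      rw [show 2*π*t = 2*(π*t) by ring, Real.cos_two_mul]
    have c3 : Real.cos (3*π*t) = 4 * Real.cos (π*t)^3 - 3*Real.cos (π*t) := by
      rw [show 3*π*t = 3*(π*t) by ring, Real.cos_three_mul]
    have ec : Real.cos (π*t/2)^2 = (1 + Real.cos (π*t))/2 := by
      have := Real.cos_sq (π*t/2)
      rw [this, show 2*(π*t/2) = π*t by ring]; ring
    have es : Real.sin (π*t) ^ 2 = 1 - Real.cos (π*t)^2 := Real.sin_sq _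
    rw [ec, es, c2, c3]
    have hπ := Real.pi_ne_zero
    field_simp
    ring
  rw [intervalIntegral.integral_eq_sub_of_hasDerivAt key
    (Continuous.intervalIntegrable (by continuity) _ _)]
  have s2 : Real.sin (2*π) = 0 := Real.sin_two_pi
  have s3 : Real.sin (3*π) = 0 := by
    rw [show (3:ℝ)*π = π + 2*π by ring, Real.sin_add, s2, Real.sin_pi]; simp
  norm_num [mul_neg, mul_one, Real.sin_neg, Real.sin_pi, s2, s3,
    show (2:ℝ)*π*1 = 2*π by ring, show (2:ℝ)*π*(-1) = -(2*π) by ring,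
    show (3:ℝ)*π*1 = 3*π by ring, show (3:ℝ)*π*(-1) = -(3*π) by ring]

/-- Explicit computation of the bifurcation function `P` for `σ₁ = 2` on the square
`(−1,1)²`: `P(α) = (3/16)(α³ − α)`, whose simple roots are `0, 1, −1`. -/
theorem bifurcation_function_square :
    ∀ α : ℝ,
      (∫ p in (Set.Ioo (-1 : ℝ) 1) ×ˢ (Set.Ioo (-1 : ℝ) 1),
        ((Real.cos (π * p.1 / 2) * Real.sin (π * p.2)
            + α * (Real.cos (π * p.2 / 2) * Real.sin (π * p.1))) ^ 3 *
          (α * (Real.cos (π * p.1 / 2) * Real.sin (π * p.2))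
            - Real.cos (π * p.2 / 2) * Real.sin (π * p.1)))) =
        3 / 16 * (α ^ 3 - α) ∧
      (3 / 16 * (α ^ 3 - α) = 0 ↔ α = 0 ∨ α = 1 ∨ α = -1) := by
  intro α
  constructor
  · have hmono : (Set.Ioo (-1:ℝ) 1) ×ˢ (Set.Ioo (-1:ℝ) 1)
        ⊆ (Set.Icc (-1:ℝ) 1) ×ˢ (Set.Icc (-1:ℝ) 1) :=
      Set.prod_mono Set.Ioo_subset_Icc_self Set.Ioo_subset_Icc_self
    have hint : ∀ f : ℝ × ℝ → ℝ, Continuous f →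
        IntegrableOn f ((Set.Ioo (-1:ℝ) 1) ×ˢ (Set.Ioo (-1:ℝ) 1)) := fun f hf =>
      (hf.continuousOn.integrableOn_compact (isCompact_Icc.prod isCompact_Icc)).mono_set hmono
    have hfun : (fun p : ℝ × ℝ =>
        (Real.cos (π * p.1 / 2) * Real.sin (π * p.2)
            + α * (Real.cos (π * p.2 / 2) * Real.sin (π * p.1))) ^ 3 *
          (α * (Real.cos (π * p.1 / 2) * Real.sin (π * p.2))
            - Real.cos (π * p.2 / 2) * Real.sin (π * p.1)))
      = fun p : ℝ × ℝ =>
        α * (Real.cos (π * p.1 / 2) ^ 4 * Real.sin (π * p.2) ^ 4)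
        + (3*α^2 - 1) * ((Real.cos (π * p.1 / 2) ^ 3 * Real.sin (π * p.1)) *
            (Real.cos (π * p.2 / 2) * Real.sin (π * p.2) ^ 3))
        + (3*α^3 - 3*α) * ((Real.cos (π * p.1 / 2) ^ 2 * Real.sin (π * p.1) ^ 2) *
            (Real.cos (π * p.2 / 2) ^ 2 * Real.sin (π * p.2) ^ 2))
        + (α^4 - 3*α^2) * ((Real.cos (π * p.1 / 2) * Real.sin (π * p.1) ^ 3) *
            (Real.cos (π * p.2 / 2) ^ 3 * Real.sin (π * p.2)))
        - α^3 * (Real.sin (π * p.1) ^ 4 * Real.cos (π * p.2 / 2) ^ 4) := by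
      funext p; ring
    rw [hfun]
    have i1 : IntegrableOn (fun p : ℝ × ℝ =>
        α * (Real.cos (π * p.1 / 2) ^ 4 * Real.sin (π * p.2) ^ 4)) _ :=
      hint _ (by fun_prop)
    have i2 : IntegrableOn (fun p : ℝ × ℝ =>
        (3*α^2 - 1) * ((Real.cos (π * p.1 / 2) ^ 3 * Real.sin (π * p.1)) *
            (Real.cos (π * p.2 / 2) * Real.sin (π * p.2) ^ 3))) _ :=
      hint _ (by fun_prop)
    have i3 : IntegrableOn (fun p : ℝ × ℝ =>
        (3*α^3 - 3*α) * ((Real.cos (π * p.1 / 2) ^ 2 * Real.sin (π * p.1) ^ 2) *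
            (Real.cos (π * p.2 / 2) ^ 2 * Real.sin (π * p.2) ^ 2))) _ :=
      hint _ (by fun_prop)
    have i4 : IntegrableOn (fun p : ℝ × ℝ =>
        (α^4 - 3*α^2) * ((Real.cos (π * p.1 / 2) * Real.sin (π * p.1) ^ 3) *
            (Real.cos (π * p.2 / 2) ^ 3 * Real.sin (π * p.2)))) _ :=
      hint _ (by fun_prop)
    have i5 : IntegrableOn (fun p : ℝ × ℝ =>
        α^3 * (Real.sin (π * p.1) ^ 4 * Real.cos (π * p.2 / 2) ^ 4)) _ :=
      hint _ (by fun_prop)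
    have i12 : IntegrableOn (fun p : ℝ × ℝ =>
        α * (Real.cos (π * p.1 / 2) ^ 4 * Real.sin (π * p.2) ^ 4)
        + (3*α^2 - 1) * ((Real.cos (π * p.1 / 2) ^ 3 * Real.sin (π * p.1)) *
            (Real.cos (π * p.2 / 2) * Real.sin (π * p.2) ^ 3)))
        ((Set.Ioo (-1:ℝ) 1) ×ˢ (Set.Ioo (-1:ℝ) 1)) := i1.add i2
    have i123 : IntegrableOn (fun p : ℝ × ℝ =>
        α * (Real.cos (π * p.1 / 2) ^ 4 * Real.sin (π * p.2) ^ 4)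
        + (3*α^2 - 1) * ((Real.cos (π * p.1 / 2) ^ 3 * Real.sin (π * p.1)) *
            (Real.cos (π * p.2 / 2) * Real.sin (π * p.2) ^ 3))
        + (3*α^3 - 3*α) * ((Real.cos (π * p.1 / 2) ^ 2 * Real.sin (π * p.1) ^ 2) *
            (Real.cos (π * p.2 / 2) ^ 2 * Real.sin (π * p.2) ^ 2)))
        ((Set.Ioo (-1:ℝ) 1) ×ˢ (Set.Ioo (-1:ℝ) 1)) := i12.add i3
    have i1234 : IntegrableOn (fun p : ℝ × ℝ =>
        α * (Real.cos (π * p.1 / 2) ^ 4 * Real.sin (π * p.2) ^ 4)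
        + (3*α^2 - 1) * ((Real.cos (π * p.1 / 2) ^ 3 * Real.sin (π * p.1)) *
            (Real.cos (π * p.2 / 2) * Real.sin (π * p.2) ^ 3))
        + (3*α^3 - 3*α) * ((Real.cos (π * p.1 / 2) ^ 2 * Real.sin (π * p.1) ^ 2) *
            (Real.cos (π * p.2 / 2) ^ 2 * Real.sin (π * p.2) ^ 2))
        + (α^4 - 3*α^2) * ((Real.cos (π * p.1 / 2) * Real.sin (π * p.1) ^ 3) *
            (Real.cos (π * p.2 / 2) ^ 3 * Real.sin (π * p.2))))
        ((Set.Ioo (-1:ℝ) 1) ×ˢ (Set.Ioo (-1:ℝ) 1)) := i123.add i4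
    rw [MeasureTheory.integral_sub i1234 i5,
      MeasureTheory.integral_add i123 i4,
      MeasureTheory.integral_add i12 i3,
      MeasureTheory.integral_add i1 i2,
      MeasureTheory.integral_const_mul, MeasureTheory.integral_const_mul,
      MeasureTheory.integral_const_mul, MeasureTheory.integral_const_mul,
      MeasureTheory.integral_const_mul, MeasureTheory.Measure.volume_eq_prod]
    have E1 : (∫ a : ℝ × ℝ in (Set.Ioo (-1:ℝ) 1) ×ˢ (Set.Ioo (-1:ℝ) 1),
        Real.cos (π * a.1 / 2) ^ 4 * Real.sin (π * a.2) ^ 4 ∂(volume.prod volume))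
        = (∫ t in Set.Ioo (-1:ℝ) 1, Real.cos (π * t / 2) ^ 4)
          * (∫ t in Set.Ioo (-1:ℝ) 1, Real.sin (π * t) ^ 4) :=
      MeasureTheory.setIntegral_prod_mul (fun t => Real.cos (π * t / 2) ^ 4)
        (fun t => Real.sin (π * t) ^ 4) _ _
    have E2 : (∫ a : ℝ × ℝ in (Set.Ioo (-1:ℝ) 1) ×ˢ (Set.Ioo (-1:ℝ) 1),
        Real.cos (π * a.1 / 2) ^ 3 * Real.sin (π * a.1)
          * (Real.cos (π * a.2 / 2) * Real.sin (π * a.2) ^ 3) ∂(volume.prod volume))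
        = (∫ t in Set.Ioo (-1:ℝ) 1, Real.cos (π * t / 2) ^ 3 * Real.sin (π * t))
          * (∫ t in Set.Ioo (-1:ℝ) 1, Real.cos (π * t / 2) * Real.sin (π * t) ^ 3) :=
      MeasureTheory.setIntegral_prod_mul (fun t => Real.cos (π * t / 2) ^ 3 * Real.sin (π * t))
        (fun t => Real.cos (π * t / 2) * Real.sin (π * t) ^ 3) _ _
    have E3 : (∫ a : ℝ × ℝ in (Set.Ioo (-1:ℝ) 1) ×ˢ (Set.Ioo (-1:ℝ) 1),
        Real.cos (π * a.1 / 2) ^ 2 * Real.sin (π * a.1) ^ 2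
          * (Real.cos (π * a.2 / 2) ^ 2 * Real.sin (π * a.2) ^ 2) ∂(volume.prod volume))
        = (∫ t in Set.Ioo (-1:ℝ) 1, Real.cos (π * t / 2) ^ 2 * Real.sin (π * t) ^ 2)
          * (∫ t in Set.Ioo (-1:ℝ) 1, Real.cos (π * t / 2) ^ 2 * Real.sin (π * t) ^ 2) :=
      MeasureTheory.setIntegral_prod_mul (fun t => Real.cos (π * t / 2) ^ 2 * Real.sin (π * t) ^ 2)
        (fun t => Real.cos (π * t / 2) ^ 2 * Real.sin (π * t) ^ 2) _ _
    have E4 : (∫ a : ℝ × ℝ in (Set.Ioo (-1:ℝ) 1) ×ˢ (Set.Ioo (-1:ℝ) 1),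
        Real.cos (π * a.1 / 2) * Real.sin (π * a.1) ^ 3
          * (Real.cos (π * a.2 / 2) ^ 3 * Real.sin (π * a.2)) ∂(volume.prod volume))
        = (∫ t in Set.Ioo (-1:ℝ) 1, Real.cos (π * t / 2) * Real.sin (π * t) ^ 3)
          * (∫ t in Set.Ioo (-1:ℝ) 1, Real.cos (π * t / 2) ^ 3 * Real.sin (π * t)) :=
      MeasureTheory.setIntegral_prod_mul (fun t => Real.cos (π * t / 2) * Real.sin (π * t) ^ 3)
        (fun t => Real.cos (π * t / 2) ^ 3 * Real.sin (π * t)) _ _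
    have E5 : (∫ a : ℝ × ℝ in (Set.Ioo (-1:ℝ) 1) ×ˢ (Set.Ioo (-1:ℝ) 1),
        Real.sin (π * a.1) ^ 4 * Real.cos (π * a.2 / 2) ^ 4 ∂(volume.prod volume))
        = (∫ t in Set.Ioo (-1:ℝ) 1, Real.sin (π * t) ^ 4)
          * (∫ t in Set.Ioo (-1:ℝ) 1, Real.cos (π * t / 2) ^ 4) :=
      MeasureTheory.setIntegral_prod_mul (fun t => Real.sin (π * t) ^ 4)
        (fun t => Real.cos (π * t / 2) ^ 4) _ _
    rw [E1, E2, E3, E4, E5, J1, J2, J3, J4, J5]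
    ring
  · constructor
    · intro h
      have h' : α * (α - 1) * (α + 1) = 0 := by linear_combination (16/3) * h
      rcases mul_eq_zero.1 h' with h'' | h''
      · rcases mul_eq_zero.1 h'' with h0 | h1
        · exact Or.inl h0
        · exact Or.inr (Or.inl (by linarith))
      · exact Or.inr (Or.inr (by linarith))
    · rintro (rfl | rfl | rfl) <;> norm_num
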